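/- Let $w' \in [0,1]^n$ be $(L,R)$-good for $(X,y)$, and let $v \in [0,1]^n$ satisfy $\mathrm{supp}(w')\cap\mathrm{supp}(v) = \emptyset$ and $\|v\|_1 L \le 1/8$. Set $w = w' + v$ and $\eta = 1 + 8\|v\|_1 L$. Assume $X^\top \mathrm{diag}(w)X$ is invertible and $x_j^\top (X^\top\mathrm{diag}(w)X)^{-1}x_j \le 2L$ for all $j \in \mathrm{supp}(w)$. If $\max_{i \in \mathrm{supp}(w)}|y_i - x_i^\top \beta_w| > \eta R$, then every maximizer of $|y_i - x_i^\top \beta_w|$ over $\mathrm{supp}(w)$ lies in $\mathrm{supp}(v)$. -/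

import Mathlib

open Matrix

/-- The weighted OLS solution `β_w = (Xᵀ diag(w) X)⁻¹ Xᵀ diag(w) y`. -/
noncomputable def weightedOLS {n d : ℕ} (X : Matrix (Fin n) (Fin d) ℝ)
    (y : Fin n → ℝ) (w : Fin n → ℝ) : Fin d → ℝ :=
  (Xᵀ * Matrix.diagonal w * X)⁻¹ *ᵥ (Xᵀ *ᵥ fun i => w i * y i)

lemma psd_cs {d : ℕ} {M : Matrix (Fin d) (Fin d) ℝ} (hM : M.PosSemidef)
    (a b : Fin d → ℝ) : (a ⬝ᵥ M *ᵥ b) ^ 2 ≤ (a ⬝ᵥ M *ᵥ a) * (b ⬝ᵥ M *ᵥ b) := by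
  classical
  open scoped MatrixOrder Matrix.Norms.L2Operator in
  obtain ⟨B, rfl⟩ := CStarAlgebra.nonneg_iff_eq_star_mul_self.mp hM.nonneg
  rw [Matrix.star_eq_conjTranspose]
  have key : ∀ x z : Fin d → ℝ, x ⬝ᵥ (Bᴴ * B) *ᵥ z = (B *ᵥ x) ⬝ᵥ (B *ᵥ z) := by
    intro x z
    rw [← mulVec_mulVec, Matrix.dotProduct_mulVec,
      Matrix.conjTranspose_eq_transpose_of_trivial, Matrix.vecMul_transpose]
  rw [key, key, key]
  simpa [dotProduct, pow_two] using
    Finset.sum_mul_sq_le_sq_mul_sq Finset.univ (B *ᵥ a) (B *ᵥ b)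

lemma mulVec_triple {n d : ℕ} (X : Matrix (Fin n) (Fin d) ℝ) (u : Fin n → ℝ)
    (b : Fin d → ℝ) :
    (Xᵀ * Matrix.diagonal u * X) *ᵥ b = Xᵀ *ᵥ fun i => u i * (X i ⬝ᵥ b) := by
  have h : Matrix.diagonal u *ᵥ (X *ᵥ b) = fun i => u i * (X i ⬝ᵥ b) := by
    ext i; rw [mulVec_diagonal]; rfl
  rw [Matrix.mul_assoc, ← mulVec_mulVec, ← mulVec_mulVec, h]

lemma normalEq {n d : ℕ} (X : Matrix (Fin n) (Fin d) ℝ) (y w : Fin n → ℝ)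
    (h : IsUnit (Xᵀ * Matrix.diagonal w * X).det) :
    (Xᵀ * Matrix.diagonal w * X) *ᵥ weightedOLS X y w = Xᵀ *ᵥ fun i => w i * y i := by
  unfold weightedOLS
  rw [mulVec_mulVec, Matrix.mul_nonsing_inv _ h, one_mulVec]

lemma dot_expand {n d : ℕ} (B : Matrix (Fin d) (Fin d) ℝ) (X : Matrix (Fin n) (Fin d) ℝ)
    (x : Fin d → ℝ) (u : Fin n → ℝ) :
    x ⬝ᵥ B *ᵥ (Xᵀ *ᵥ u) = ∑ j, u j * (x ⬝ᵥ B *ᵥ X j) := by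
  calc x ⬝ᵥ B *ᵥ (Xᵀ *ᵥ u)
      = ∑ k, ∑ l, ∑ j, x k * B k l * (X j l * u j) := by
        simp [dotProduct, mulVec, transpose_apply, Finset.mul_sum, mul_assoc]
    _ = ∑ k, ∑ j, ∑ l, x k * B k l * (X j l * u j) :=
        Finset.sum_congr rfl fun k _ => Finset.sum_comm
    _ = ∑ j, ∑ k, ∑ l, x k * B k l * (X j l * u j) := Finset.sum_comm
    _ = ∑ j, u j * (x ⬝ᵥ B *ᵥ X j) := by
        refine Finset.sum_congr rfl fun j _ => ?_
        simp only [dotProduct, mulVec, Finset.mul_sum]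
        refine Finset.sum_congr rfl fun k _ => ?_
        refine Finset.sum_congr rfl fun l _ => by ring

lemma delta_id {n d : ℕ} (X : Matrix (Fin n) (Fin d) ℝ) (y w' v : Fin n → ℝ)
    (hinv' : IsUnit (Xᵀ * Matrix.diagonal w' * X).det)
    (hinv : IsUnit (Xᵀ * Matrix.diagonal (w' + v) * X).det) :
    weightedOLS X y (w' + v) - weightedOLS X y w' =
      (Xᵀ * Matrix.diagonal (w' + v) * X)⁻¹ *ᵥ
        (Xᵀ *ᵥ fun j => v j * (y j - X j ⬝ᵥ weightedOLS X y w')) := by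
  set A := Xᵀ * Matrix.diagonal (w' + v) * X with hA
  set β := weightedOLS X y (w' + v) with hβ
  set β' := weightedOLS X y w' with hβ'
  have e1 : A *ᵥ β = Xᵀ *ᵥ fun i => (w' + v) i * y i := normalEq X y (w' + v) hinv
  have e2 : A *ᵥ β' = Xᵀ *ᵥ fun i => (w' + v) i * (X i ⬝ᵥ β') := mulVec_triple X (w' + v) β'
  have e3 : (Xᵀ *ᵥ fun i => w' i * (X i ⬝ᵥ β')) = Xᵀ *ᵥ fun i => w' i * y i := by
    rw [← mulVec_triple X w' β', normalEq X y w' hinv']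
  have key : A *ᵥ (β - β') = Xᵀ *ᵥ fun j => v j * (y j - X j ⬝ᵥ β') := by
    have split1 : (fun i => (w' + v) i * y i) =
        (fun i => v i * (y i - X i ⬝ᵥ β')) + (fun i => (w' + v) i * (X i ⬝ᵥ β'))
          + ((fun i => w' i * y i) - fun i => w' i * (X i ⬝ᵥ β')) := by
      funext i
      simp only [Pi.add_apply, Pi.sub_apply]
      ring
    rw [mulVec_sub, e1, e2, split1, mulVec_add, mulVec_add, mulVec_sub, e3]
    abel
  rw [← key, mulVec_mulVec, Matrix.nonsing_inv_mul _ hinv, one_mulVec]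


/-- Adding weight outside the support of an `(L,R)`-good vector: if the maximal
residual under the augmented weights exceeds `ηR` with `η = 1 + 8‖v‖₁L`, then
every maximizer of the residual lies among the newly added points. -/
theorem argmax_residual_in_added_support {n d : ℕ} (X : Matrix (Fin n) (Fin d) ℝ)
    (y : Fin n → ℝ) (L R : ℝ) (hL : 0 < L) (hR : 0 < R) (w' v : Fin n → ℝ)
    (hw' : ∀ i, 0 ≤ w' i ∧ w' i ≤ 1) (hv : ∀ i, 0 ≤ v i ∧ v i ≤ 1)
    (hdisj : ∀ i, w' i ≠ 0 → v i = 0)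
    (hv1 : (∑ i, |v i|) * L ≤ 1 / 8)
    -- (L,R)-goodness of w'
    (hinv' : IsUnit (Xᵀ * Matrix.diagonal w' * X).det)
    (hlev' : ∀ i, w' i ≠ 0 → X i ⬝ᵥ ((Xᵀ * Matrix.diagonal w' * X)⁻¹ *ᵥ X i) ≤ L)
    (hres' : ∀ i, w' i ≠ 0 → |X i ⬝ᵥ weightedOLS X y w' - y i| ≤ R)
    -- assumptions on w = w' + v
    (hinv : IsUnit (Xᵀ * Matrix.diagonal (w' + v) * X).det)
    (hlev : ∀ j, (w' + v) j ≠ 0 →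
      X j ⬝ᵥ ((Xᵀ * Matrix.diagonal (w' + v) * X)⁻¹ *ᵥ X j) ≤ 2 * L)
    -- the maximal residual exceeds ηR
    (hmax : ∃ i, (w' + v) i ≠ 0 ∧
      (1 + 8 * (∑ i, |v i|) * L) * R < |y i - X i ⬝ᵥ weightedOLS X y (w' + v)|) :
    ∀ i, (w' + v) i ≠ 0 →
      (∀ j, (w' + v) j ≠ 0 →
        |y j - X j ⬝ᵥ weightedOLS X y (w' + v)| ≤
          |y i - X i ⬝ᵥ weightedOLS X y (w' + v)|) →
      v i ≠ 0 := by
  classical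
  intro i hi hiMax
  by_contra hvi
  have hw'i : w' i ≠ 0 := by
    intro h
    exact hi (by simp [Pi.add_apply, h, hvi])
  set A := Xᵀ * Matrix.diagonal (w' + v) * X with hAdef
  set β := weightedOLS X y (w' + v) with hβdef
  set β' := weightedOLS X y w' with hβ'def
  set t := (∑ i, |v i|) * L with htdef
  have hvnn : ∀ j, 0 ≤ v j := fun j => (hv j).1
  have ht0 : 0 ≤ t := mul_nonneg (Finset.sum_nonneg fun j _ => abs_nonneg _) hL.le
  have ht8 : t ≤ 1 / 8 := hv1
  set M := |y i - X i ⬝ᵥ β| with hMdef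
  have hM0 : 0 ≤ M := abs_nonneg _
  have hMgt : (1 + 8 * t) * R < M := by
    obtain ⟨i0, hi0, hgt⟩ := hmax
    have hle := hiMax i0 hi0
    have he : (1 + 8 * t) * R = (1 + 8 * (∑ i, |v i|) * L) * R := by
      rw [htdef]; ring
    linarith
  have hsupp : ∀ j, v j ≠ 0 → (w' + v) j ≠ 0 := by
    intro j hj
    have h1 : 0 < v j := lt_of_le_of_ne (hvnn j) (Ne.symm hj)
    have h2 : (0:ℝ) < w' j + v j := add_pos_of_nonneg_of_pos (hw' j).1 h1
    simpa [Pi.add_apply] using h2.ne'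
  -- positive semidefiniteness
  have hD : (Matrix.diagonal (w' + v)).PosSemidef :=
    Matrix.posSemidef_diagonal_iff.mpr fun j => add_nonneg (hw' j).1 (hv j).1
  have hApsd : A.PosSemidef := by
    have h := hD.conjTranspose_mul_mul_same X
    rwa [Matrix.conjTranspose_eq_transpose_of_trivial] at h
  have hAipsd : (A⁻¹).PosSemidef := hApsd.inv
  -- Cauchy–Schwarz bound on the cross-leverage terms
  have hB : ∀ j k, (w' + v) j ≠ 0 → (w' + v) k ≠ 0 →
      |X j ⬝ᵥ A⁻¹ *ᵥ X k| ≤ 2 * L := by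
    intro j k hj hk
    have hcs := psd_cs hAipsd (X j) (X k)
    have hjj : 0 ≤ X j ⬝ᵥ A⁻¹ *ᵥ X j := by simpa using hAipsd.dotProduct_mulVec_nonneg (X j)
    have hkk : 0 ≤ X k ⬝ᵥ A⁻¹ *ᵥ X k := by simpa using hAipsd.dotProduct_mulVec_nonneg (X k)
    have h1 := hlev j hj
    have h2 := hlev k hk
    nlinarith [abs_nonneg (X j ⬝ᵥ A⁻¹ *ᵥ X k), sq_abs (X j ⬝ᵥ A⁻¹ *ᵥ X k), hL.le]
  -- the residual-difference identity
  have hid : ∀ j : Fin n, X j ⬝ᵥ β - X j ⬝ᵥ β' =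
      ∑ k, v k * (y k - X k ⬝ᵥ β') * (X j ⬝ᵥ A⁻¹ *ᵥ X k) := by
    intro j
    have hd := delta_id X y w' v hinv' hinv
    rw [← hAdef, ← hβdef, ← hβ'def] at hd
    have hdot : X j ⬝ᵥ β - X j ⬝ᵥ β' = X j ⬝ᵥ (β - β') := (dotProduct_sub _ _ _).symm
    rw [hdot, hd, dot_expand]
  -- the maximum S of |x_j(β-β')| over the support of v
  obtain ⟨S, hS0, hSmem, hSreach⟩ :
      ∃ S : ℝ, 0 ≤ S ∧ (∀ j, v j ≠ 0 → |X j ⬝ᵥ β - X j ⬝ᵥ β'| ≤ S) ∧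
        (S = 0 ∨ ∃ j0, v j0 ≠ 0 ∧ S = |X j0 ⬝ᵥ β - X j0 ⬝ᵥ β'|) := by
    by_cases hne : (Finset.univ.filter fun j => v j ≠ 0).Nonempty
    · obtain ⟨j0, hj0, hmaxj⟩ := (Finset.univ.filter fun j => v j ≠ 0).exists_max_image
        (fun j => |X j ⬝ᵥ β - X j ⬝ᵥ β'|) hne
      exact ⟨_, abs_nonneg _, fun j hj => hmaxj j (by simp [hj]),
        Or.inr ⟨j0, by simpa using hj0, rfl⟩⟩
    · exact ⟨0, le_refl 0, fun j hj => absurd ⟨j, by simp [hj]⟩ hne, Or.inl rfl⟩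
  -- residual bound at β' on the support of v
  have hr' : ∀ k, v k ≠ 0 → |y k - X k ⬝ᵥ β'| ≤ M + S := by
    intro k hk
    have h1 : |y k - X k ⬝ᵥ β| ≤ M := hiMax k (hsupp k hk)
    have h2 : |X k ⬝ᵥ β - X k ⬝ᵥ β'| ≤ S := hSmem k hk
    have he : |y k - X k ⬝ᵥ β'| = |(y k - X k ⬝ᵥ β) + (X k ⬝ᵥ β - X k ⬝ᵥ β')| := by
      congr 1; ring
    calc |y k - X k ⬝ᵥ β'| ≤ |y k - X k ⬝ᵥ β| + |X k ⬝ᵥ β - X k ⬝ᵥ β'| :=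
          he ▸ abs_add_le _ _
      _ ≤ M + S := add_le_add h1 h2
  have hsumv : ∑ j, |v j| = ∑ j, v j :=
    Finset.sum_congr rfl fun j _ => abs_of_nonneg (hvnn j)
  -- main per-point bound
  have hterm : ∀ j, (w' + v) j ≠ 0 → |X j ⬝ᵥ β - X j ⬝ᵥ β'| ≤ 2 * t * (M + S) := by
    intro j hj
    rw [hid j]
    calc |∑ k, v k * (y k - X k ⬝ᵥ β') * (X j ⬝ᵥ A⁻¹ *ᵥ X k)|
        ≤ ∑ k, |v k * (y k - X k ⬝ᵥ β') * (X j ⬝ᵥ A⁻¹ *ᵥ X k)| :=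
          Finset.abs_sum_le_sum_abs _ _
      _ ≤ ∑ k, v k * ((M + S) * (2 * L)) := by
          refine Finset.sum_le_sum fun k _ => ?_
          by_cases hk : v k = 0
          · simp [hk]
          · have h1 := hr' k hk
            have h2 := hB j k hj (hsupp k hk)
            have hMS : 0 ≤ M + S := by linarith
            rw [abs_mul, abs_mul, abs_of_nonneg (hvnn k)]
            calc v k * |y k - X k ⬝ᵥ β'| * |X j ⬝ᵥ A⁻¹ *ᵥ X k|
                ≤ v k * (M + S) * (2 * L) := by
                  apply mul_le_mul _ h2 (abs_nonneg _)
                    (mul_nonneg (hvnn k) hMS)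
                  exact mul_le_mul_of_nonneg_left h1 (hvnn k)
              _ = v k * ((M + S) * (2 * L)) := by ring
      _ = 2 * t * (M + S) := by
          rw [← Finset.sum_mul, ← hsumv, htdef]; ring
  -- the two key inequalities
  have hKeyS : S ≤ 2 * t * (M + S) := by
    rcases hSreach with h0 | ⟨j0, hj0, hSe⟩
    · rw [h0]; have : 0 ≤ M + S := by linarith
      positivity
    · exact le_trans (le_of_eq hSe) (hterm j0 (hsupp j0 hj0))
  have hKeyM : M ≤ R + 2 * t * (M + S) := by
    have h1 : |X i ⬝ᵥ β' - y i| ≤ R := hres' i hw'i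
    have h2 : |X i ⬝ᵥ β - X i ⬝ᵥ β'| ≤ 2 * t * (M + S) := hterm i hi
    have he : |y i - X i ⬝ᵥ β| = |(X i ⬝ᵥ β' - y i) + (X i ⬝ᵥ β - X i ⬝ᵥ β')| := by
      rw [← abs_neg]; congr 1; ring
    have h3 : M ≤ |X i ⬝ᵥ β' - y i| + |X i ⬝ᵥ β - X i ⬝ᵥ β'| := by
      rw [hMdef, he]; exact abs_add_le _ _
    linarith
  -- conclude by arithmetic
  have hA1 := mul_le_mul_of_nonneg_left hKeyM (show (0:ℝ) ≤ 1 - 2 * t by linarith)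
  have hB1 := mul_le_mul_of_nonneg_left hKeyS (show (0:ℝ) ≤ 2 * t by linarith)
  have hC1 := mul_lt_mul_of_pos_right hMgt (show (0:ℝ) < 1 - 4 * t by linarith)
  have hE1 : 0 ≤ R * t * (6 - 32 * t) :=
    mul_nonneg (mul_nonneg hR.le ht0) (by linarith)
  nlinarith [hA1, hB1, hC1, hE1]
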